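/- arXiv:2602.19802 — 4 statements merged into one kernel-verified Lean document; each statement's English description precedes it below -/
import Mathlib

section
/- Let X be a T-by-N' complex matrix, α a scalar, and P an invertible N-by-N complex matrix with N' = M + N. Let Q = fromBlocks I_M 0 0 P, [X]_P = X·Q, and suppose the matrix Xᵀ·X + α·I_{N'} is invertible. Then the matrix [X]_Pᵀ·[X]_P + α·(fromBlocks I_M 0 0 (Pᵀ·P)) is invertible, and for any T-by-D_out complex matrix Y, ([X]_Pᵀ·[X]_P + α·(fromBlocks I_M 0 0 (Pᵀ·P)))⁻¹·[X]_Pᵀ·Y = (fromBlocks I_M 0 0 P⁻¹)·(Xᵀ·X + α·I_{N'})⁻¹·Xᵀ·Y. That is, the ridge-regression readout weights learned directly in the transformed basis equal the change-of-basis transform of the readout weights learned in the original basis. -/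
open Matrix

set_option maxHeartbeats 1000000 in
/-- End-to-End Eigenbasis Training: the ridge-regression readout weights learned
directly in the transformed basis equal the change-of-basis transform of the
readout weights learned in the original basis. -/
theorem stmt_3
    (T M N Dout : ℕ)
    (X : Matrix (Fin T) (Fin M ⊕ Fin N) ℂ)
    (α : ℂ)
    (P : Matrix (Fin N) (Fin N) ℂ) (hP : IsUnit P.det)
    (hX : IsUnit (Xᵀ * X + α • (1 : Matrix (Fin M ⊕ Fin N) (Fin M ⊕ Fin N) ℂ)).det) :
    let Q : Matrix (Fin M ⊕ Fin N) (Fin M ⊕ Fin N) ℂ := Matrix.fromBlocks 1 0 0 P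
    IsUnit ((X * Q)ᵀ * (X * Q) + α • Matrix.fromBlocks 1 0 0 (Pᵀ * P)).det ∧
      ∀ Y : Matrix (Fin T) (Fin Dout) ℂ,
        ((X * Q)ᵀ * (X * Q) + α • Matrix.fromBlocks 1 0 0 (Pᵀ * P))⁻¹ * (X * Q)ᵀ * Y =
          Matrix.fromBlocks 1 0 0 P⁻¹ *
            (Xᵀ * X + α • (1 : Matrix (Fin M ⊕ Fin N) (Fin M ⊕ Fin N) ℂ))⁻¹ * Xᵀ * Y := by
  intro Q
  set A : Matrix (Fin M ⊕ Fin N) (Fin M ⊕ Fin N) ℂ :=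
    Xᵀ * X + α • (1 : Matrix (Fin M ⊕ Fin N) (Fin M ⊕ Fin N) ℂ) with hA
  have hQdet : IsUnit Q.det := by
    have : Q.det = (1 : Matrix (Fin M) (Fin M) ℂ).det * P.det :=
      Matrix.det_fromBlocks_zero₂₁ _ _ _
    rw [this, Matrix.det_one, one_mul]
    exact hP
  have hQT : Qᵀ = Matrix.fromBlocks 1 0 0 Pᵀ := by
    simp [Q, Matrix.fromBlocks_transpose]
  have hQinv : Q⁻¹ = Matrix.fromBlocks 1 0 0 P⁻¹ := by
    apply Matrix.inv_eq_right_inv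
    simp [Q, Matrix.fromBlocks_multiply, Matrix.mul_nonsing_inv P hP,
      ← Matrix.fromBlocks_one]
  have key : (X * Q)ᵀ * (X * Q) + α • Matrix.fromBlocks 1 0 0 (Pᵀ * P)
      = Qᵀ * A * Q := by
    have h1 : Qᵀ * (α • (1 : Matrix (Fin M ⊕ Fin N) (Fin M ⊕ Fin N) ℂ)) * Q
        = α • Matrix.fromBlocks 1 0 0 (Pᵀ * P) := by
      rw [Matrix.mul_smul, Matrix.mul_one, Matrix.smul_mul, hQT]
      simp [Q, Matrix.fromBlocks_multiply]
    rw [hA, Matrix.mul_add Qᵀ, Matrix.add_mul, h1]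
    simp [Matrix.transpose_mul, Matrix.mul_assoc]
  have hdet : IsUnit ((X * Q)ᵀ * (X * Q) + α • Matrix.fromBlocks 1 0 0 (Pᵀ * P)).det := by
    rw [key, Matrix.det_mul, Matrix.det_mul, Matrix.det_transpose]
    exact (hQdet.mul hX).mul hQdet
  refine ⟨hdet, fun Y => ?_⟩
  rw [key, Matrix.mul_inv_rev, Matrix.mul_inv_rev, Matrix.transpose_mul,
    ← Matrix.transpose_nonsing_inv]
  have hQQ : Q⁻¹ᵀ * Qᵀ = 1 := by
    rw [← Matrix.transpose_mul, Matrix.mul_nonsing_inv Q hQdet, Matrix.transpose_one]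
  simp only [Matrix.mul_assoc]
  rw [← Matrix.mul_assoc Q⁻¹ᵀ Qᵀ, hQQ, Matrix.one_mul, hQinv]
end

section
/- Let N be a positive integer, let Λ ∈ ℂ^N, let w_in ∈ ℂ^{1×N} and w_out ∈ ℂ^{N×1}, let u : ℕ → ℂ be a scalar input sequence, let r : ℕ → ℂ^{1×N} satisfy r(0) = 0 and r(t) = r(t-1) ⊙ Λ + u(t)·w_in, and let R : ℕ → ℂ^{1×N} satisfy R(0) = 0 and R(t) = R(t-1) ⊙ Λ + u(t)·𝟏 (where 𝟏 is the all-ones row vector of length N). Then for all t ≥ 0, r(t)·w_out = R(t)·(w_inᵀ ⊙ w_out), where w_inᵀ ⊙ w_out is the entrywise product of the column vectors w_inᵀ and w_out. In particular, r(t)·w_out = Σ_{p=1}^{N} R(t)_p·(w_in)_p·(w_out)_p. -/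
open Matrix

/-- One-dimensional input/output case: the output `r(t)·w_out` equals the output
computed from the input-weight-free state, `R(t)·(w_inᵀ ⊙ w_out)`; in particular
`r(t)·w_out = Σ_p R(t)_p·(w_in)_p·(w_out)_p`. -/
theorem stmt_8
    (N : ℕ) (hN : 0 < N)
    (Λ : Fin N → ℂ)
    (w_in : Matrix (Fin 1) (Fin N) ℂ)
    (w_out : Matrix (Fin N) (Fin 1) ℂ)
    (u : ℕ → ℂ)
    (r : ℕ → Matrix (Fin 1) (Fin N) ℂ)
    (R : ℕ → Matrix (Fin 1) (Fin N) ℂ)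
    (hr0 : r 0 = 0)
    (hr : ∀ t : ℕ, 1 ≤ t →
      r t = Matrix.of (fun (i : Fin 1) (j : Fin N) => r (t - 1) i j * Λ j) + u t • w_in)
    (hR0 : R 0 = 0)
    (hR : ∀ t : ℕ, 1 ≤ t →
      R t = Matrix.of (fun (i : Fin 1) (j : Fin N) => R (t - 1) i j * Λ j)
              + Matrix.of (fun (_ : Fin 1) (_ : Fin N) => u t)) :
    ∀ t : ℕ,
      r t * w_out =
        R t * Matrix.of (fun (p : Fin N) (_ : Fin 1) => w_in 0 p * w_out p 0) ∧
      (r t * w_out) 0 0 = ∑ p : Fin N, R t 0 p * w_in 0 p * w_out p 0 := by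
  have key : ∀ t : ℕ, ∀ j : Fin N, r t 0 j = R t 0 j * w_in 0 j := by
    intro t
    induction t with
    | zero => intro j; simp [hr0, hR0]
    | succ n ih =>
      intro j
      rw [hr (n+1) (Nat.le_add_left 1 n), hR (n+1) (Nat.le_add_left 1 n)]
      simp only [Nat.add_sub_cancel, Matrix.add_apply, Matrix.of_apply,
        Matrix.smul_apply, smul_eq_mul, ih j]
      ring
  intro t
  have h1 : r t * w_out =
      R t * Matrix.of (fun (p : Fin N) (_ : Fin 1) => w_in 0 p * w_out p 0) := by
    ext i k
    fin_cases i; fin_cases k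
    simp [Matrix.mul_apply, key]
    apply Finset.sum_congr rfl
    intro p _
    ring
  refine ⟨h1, ?_⟩
  rw [h1]
  simp [Matrix.mul_apply]
  apply Finset.sum_congr rfl
  intro p _
  ring
end

section
/- Let N be a positive integer, let Λ ∈ ℂ^N, let w_in ∈ ℂ^{1×N} have no zero entry, let u : ℕ → ℂ be a scalar input sequence, let r : ℕ → ℂ^{1×N} satisfy r(0) = 0 and r(t) = r(t-1) ⊙ Λ + u(t)·w_in, and let R : ℕ → ℂ^{1×N} satisfy R(0) = 0 and R(t) = R(t-1) ⊙ Λ + u(t)·𝟏. Let T ≥ 1 and let L : ℂ^T → ℝ be any loss function of the length-T output sequence. Then the map β ↦ w_inᵀ ⊙ β is a bijection of ℂ^{N×1} (with inverse γ ↦ γ ⊘ w_inᵀ, entrywise division), and a column vector β ∈ ℂ^{N×1} minimizes β ↦ L((r(1)·β, …, r(T)·β)) over ℂ^{N×1} if and only if γ = w_inᵀ ⊙ β minimizes γ ↦ L((R(1)·γ, …, R(T)·γ)) over ℂ^{N×1}. Consequently, if γ* is a minimizer of the second problem, then w_out = γ* ⊘ w_inᵀ is a minimizer of the first. -/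
open Matrix

/-- Readout optimization without input weights: when `w_in` has no zero entry, the
map `β ↦ w_inᵀ ⊙ β` is a bijection of `ℂ^{N×1}` (with inverse the entrywise
division by `w_inᵀ`), and `β` minimizes the loss of the output sequence
`(r(t)·β)_{1≤t≤T}` iff `γ = w_inᵀ ⊙ β` minimizes the loss of `(R(t)·γ)_{1≤t≤T}`;
consequently a minimizer `γ*` of the second problem yields the minimizer
`w_out = γ* ⊘ w_inᵀ` of the first. -/
theorem stmt_9
    (N T : ℕ) (hN : 0 < N) (hT : 1 ≤ T)
    (Λ : Fin N → ℂ)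
    (w_in : Matrix (Fin 1) (Fin N) ℂ) (hw : ∀ j : Fin N, w_in 0 j ≠ 0)
    (u : ℕ → ℂ)
    (r : ℕ → Matrix (Fin 1) (Fin N) ℂ)
    (R : ℕ → Matrix (Fin 1) (Fin N) ℂ)
    (hr0 : r 0 = 0)
    (hr : ∀ t : ℕ, 1 ≤ t →
      r t = Matrix.of (fun (i : Fin 1) (j : Fin N) => r (t - 1) i j * Λ j) + u t • w_in)
    (hR0 : R 0 = 0)
    (hR : ∀ t : ℕ, 1 ≤ t →
      R t = Matrix.of (fun (i : Fin 1) (j : Fin N) => R (t - 1) i j * Λ j)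
              + Matrix.of (fun (_ : Fin 1) (_ : Fin N) => u t))
    (L : (Fin T → ℂ) → ℝ) :
    -- the reparametrization map and its entrywise-division inverse
    Function.Bijective
      (fun β : Matrix (Fin N) (Fin 1) ℂ =>
        Matrix.of (fun (p : Fin N) (o : Fin 1) => w_in 0 p * β p o)) ∧
    (∀ γ : Matrix (Fin N) (Fin 1) ℂ,
      Matrix.of (fun (p : Fin N) (o : Fin 1) =>
        w_in 0 p * (Matrix.of (fun (q : Fin N) (o' : Fin 1) => γ q o' / w_in 0 q)) p o)
        = γ) ∧
    (∀ β : Matrix (Fin N) (Fin 1) ℂ,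
      Matrix.of (fun (p : Fin N) (o : Fin 1) =>
        (Matrix.of (fun (q : Fin N) (o' : Fin 1) => w_in 0 q * β q o')) p o / w_in 0 p)
        = β) ∧
    -- β minimizes the original problem iff w_inᵀ ⊙ β minimizes the transformed one
    (∀ β : Matrix (Fin N) (Fin 1) ℂ,
      (∀ β' : Matrix (Fin N) (Fin 1) ℂ,
          L (fun t : Fin T => (r (t.1 + 1) * β) 0 0) ≤
            L (fun t : Fin T => (r (t.1 + 1) * β') 0 0)) ↔
      (∀ γ' : Matrix (Fin N) (Fin 1) ℂ,
          L (fun t : Fin T =>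
              (R (t.1 + 1) * Matrix.of (fun (p : Fin N) (o : Fin 1) => w_in 0 p * β p o)) 0 0) ≤
            L (fun t : Fin T => (R (t.1 + 1) * γ') 0 0))) ∧
    -- consequently, a minimizer γ* of the second problem gives γ* ⊘ w_inᵀ for the first
    (∀ γstar : Matrix (Fin N) (Fin 1) ℂ,
      (∀ γ' : Matrix (Fin N) (Fin 1) ℂ,
          L (fun t : Fin T => (R (t.1 + 1) * γstar) 0 0) ≤
            L (fun t : Fin T => (R (t.1 + 1) * γ') 0 0)) →
      (∀ β' : Matrix (Fin N) (Fin 1) ℂ,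
          L (fun t : Fin T =>
              (r (t.1 + 1) * Matrix.of (fun (p : Fin N) (o : Fin 1) => γstar p o / w_in 0 p)) 0 0) ≤
            L (fun t : Fin T => (r (t.1 + 1) * β') 0 0))) := by

  -- key: r t = w_in ⊙ R t entrywise
  have key : ∀ t : ℕ, ∀ j : Fin N, r t 0 j = w_in 0 j * R t 0 j := by
    intro t
    induction t with
    | zero => intro j; simp [hr0, hR0]
    | succ n ih =>
      intro j
      rw [hr (n+1) (Nat.le_add_left 1 n), hR (n+1) (Nat.le_add_left 1 n)]
      simp only [Matrix.add_apply, Matrix.of_apply, Matrix.smul_apply, smul_eq_mul,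
        Nat.add_sub_cancel, ih]
      ring
  -- products agree under reparametrization
  have prod : ∀ (t : ℕ) (β : Matrix (Fin N) (Fin 1) ℂ),
      (r t * β) 0 0 =
        (R t * Matrix.of (fun (p : Fin N) (o : Fin 1) => w_in 0 p * β p o)) 0 0 := by
    intro t β
    simp only [Matrix.mul_apply, Matrix.of_apply, key]
    apply Finset.sum_congr rfl
    intro j _
    ring
  have inv1 : ∀ γ : Matrix (Fin N) (Fin 1) ℂ,
      Matrix.of (fun (p : Fin N) (o : Fin 1) =>
        w_in 0 p * (Matrix.of (fun (q : Fin N) (o' : Fin 1) => γ q o' / w_in 0 q)) p o) = γ := by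
    intro γ; ext p o; simp [mul_div_cancel₀ _ (hw p)]
  have inv2 : ∀ β : Matrix (Fin N) (Fin 1) ℂ,
      Matrix.of (fun (p : Fin N) (o : Fin 1) =>
        (Matrix.of (fun (q : Fin N) (o' : Fin 1) => w_in 0 q * β q o')) p o / w_in 0 p) = β := by
    intro β; ext p o; simp [mul_div_cancel_left₀ _ (hw p)]
  refine ⟨⟨?_, ?_⟩, inv1, inv2, ?_, ?_⟩
  · intro a b hab
    have := congrArg (fun γ => Matrix.of (fun (p : Fin N) (o : Fin 1) => γ p o / w_in 0 p)) hab
    have ha := inv2 a; have hb := inv2 b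
    simp only [Matrix.of_apply] at this ha hb
    rw [← ha, ← hb]
    exact congrArg _ (by ext p o; exact congrFun (congrFun this p) o)
  · intro γ
    exact ⟨Matrix.of (fun (q : Fin N) (o' : Fin 1) => γ q o' / w_in 0 q), inv1 γ⟩
  · intro β
    constructor
    · intro h γ'
      calc L (fun t : Fin T =>
              (R (t.1 + 1) * Matrix.of (fun (p : Fin N) (o : Fin 1) => w_in 0 p * β p o)) 0 0)
          = L (fun t : Fin T => (r (t.1 + 1) * β) 0 0) := by
            congr 1; funext t; rw [prod]
        _ ≤ L (fun t : Fin T =>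
              (r (t.1 + 1) * Matrix.of (fun (q : Fin N) (o' : Fin 1) => γ' q o' / w_in 0 q)) 0 0) :=
            h _
        _ = L (fun t : Fin T => (R (t.1 + 1) * γ') 0 0) := by
            congr 1; funext t; rw [prod, inv1]
    · intro h β'
      calc L (fun t : Fin T => (r (t.1 + 1) * β) 0 0)
          = L (fun t : Fin T =>
              (R (t.1 + 1) * Matrix.of (fun (p : Fin N) (o : Fin 1) => w_in 0 p * β p o)) 0 0) := by
            congr 1; funext t; rw [prod]
        _ ≤ L (fun t : Fin T =>
              (R (t.1 + 1) * Matrix.of (fun (p : Fin N) (o : Fin 1) => w_in 0 p * β' p o)) 0 0) :=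
            h _
        _ = L (fun t : Fin T => (r (t.1 + 1) * β') 0 0) := by
            congr 1; funext t; rw [prod]
  · intro γstar hmin β'
    have e1 : (fun t : Fin T =>
        (r (t.1 + 1) * Matrix.of (fun (p : Fin N) (o : Fin 1) => γstar p o / w_in 0 p)) 0 0)
        = (fun t : Fin T => (R (t.1 + 1) * γstar) 0 0) := by
      funext t; rw [prod, inv1]
    rw [e1]
    calc L (fun t : Fin T => (R (t.1 + 1) * γstar) 0 0)
        ≤ L (fun t : Fin T =>
            (R (t.1 + 1) * Matrix.of (fun (p : Fin N) (o : Fin 1) => w_in 0 p * β' p o)) 0 0) :=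
          hmin _
      _ = L (fun t : Fin T => (r (t.1 + 1) * β') 0 0) := by
          congr 1; funext t; rw [prod]
end

section
/- Let N, D_in, D_out be positive integers, let Λ ∈ ℂ^N, W_in ∈ ℂ^{D_in×N}, W_out ∈ ℂ^{N×D_out}, and let u : ℕ → ℂ^{D_in}. Let r : ℕ → ℂ^{1×N} satisfy r(0) = 0 and r(t) = r(t-1) ⊙ Λ + u(t)ᵀ·W_in, and let R : ℕ → ℂ^{D_in×N} satisfy R(0) = 0 and R(t)_{d,j} = R(t-1)_{d,j}·Λ_j + u(t)_d. Then the output y(t) = r(t)·W_out satisfies, for all t ≥ 0, y(t) = (𝟏ᵀ·(W_in ⊙ R(t)))·W_out, where 𝟏 is the all-ones column vector of length D_in and ⊙ is entrywise matrix multiplication. In particular, the temporal dynamics of the network are entirely captured by R(t) and Λ, independently of the input weights W_in. -/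
open Matrix

/-- The output of a diagonal linear ESN is entirely captured by the
input-weight-free state matrix `R(t)` and the eigenvalues:
`y(t) = r(t)·W_out = (𝟏ᵀ·(W_in ⊙ R(t)))·W_out`. -/
theorem stmt_15
    (N Din Dout : ℕ) (hN : 0 < N) (hDin : 0 < Din) (hDout : 0 < Dout)
    (Λ : Fin N → ℂ)
    (Win : Matrix (Fin Din) (Fin N) ℂ)
    (Wout : Matrix (Fin N) (Fin Dout) ℂ)
    (u : ℕ → Fin Din → ℂ)
    (r : ℕ → Matrix (Fin 1) (Fin N) ℂ)
    (R : ℕ → Matrix (Fin Din) (Fin N) ℂ)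
    (hr0 : r 0 = 0)
    (hr : ∀ t : ℕ, 1 ≤ t →
      r t = Matrix.of (fun (i : Fin 1) (j : Fin N) => r (t - 1) i j * Λ j)
              + Matrix.of (fun (_ : Fin 1) (j : Fin N) => Matrix.vecMul (u t) Win j))
    (hR0 : R 0 = 0)
    (hR : ∀ t : ℕ, 1 ≤ t → ∀ (d : Fin Din) (j : Fin N),
      R t d j = R (t - 1) d j * Λ j + u t d) :
    ∀ t : ℕ,
      r t * Wout =
        (Matrix.of (fun (_ : Fin 1) (_ : Fin Din) => (1 : ℂ)) *
          Matrix.of (fun (d : Fin Din) (j : Fin N) => Win d j * R t d j)) * Wout := by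

  have key : ∀ t : ℕ, ∀ j : Fin N,
      r t 0 j = ∑ d : Fin Din, Win d j * R t d j := by
    intro t
    induction t with
    | zero =>
      intro j
      simp [hr0, hR0]
    | succ t ih =>
      intro j
      have h1 := hr (t + 1) (Nat.le_add_left 1 t)
      have hRt : ∀ d : Fin Din, R (t + 1) d j = R t d j * Λ j + u (t + 1) d := by
        intro d
        simpa using hR (t + 1) (Nat.le_add_left 1 t) d j
      rw [h1]
      simp only [Matrix.add_apply, Matrix.of_apply, Nat.add_sub_cancel, ih j,
        Matrix.vecMul, dotProduct]
      rw [Finset.sum_mul]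
      rw [← Finset.sum_add_distrib]
      apply Finset.sum_congr rfl
      intro d _
      rw [hRt d]
      ring
  intro t
  congr 1
  ext i j
  have hi : i = 0 := Subsingleton.elim i 0
  subst hi
  rw [key t j]
  simp [Matrix.mul_apply]
end
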